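/- Let A be a block 3×3 saddle-point matrix A = [[H, 0, Jᵤᵀ],[0, W, J_ρᵀ],[Jᵤ, J_ρ, 0]] with Jᵤ invertible, and let à = [[H, 0, Jᵤᵀ],[0, W, J_ρᵀ],[Jᵤ, 0, 0]] be the block Gauss-Seidel preconditioner. Assume H is symmetric positive semidefinite, W is symmetric positive definite. Then every eigenvalue λ of Ã^{-1}A is real and satisfies λ ≥ 1; moreover there are at least 2·nᵤ eigenvalues (counted with algebraic multiplicity) equal to 1, where nᵤ is the size of the blocks H and Jᵤ, and the remaining eigenvalues are 1 + λ_j(W^{-1} Ĥ_d) where Ĥ_d = (Jᵤ^{-1}J_ρ)ᵀ H (Jᵤ^{-1}J_ρ). -/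

import Mathlib

open Matrix Polynomial
open scoped ComplexOrder

private lemma auxFromRowsAdd {R m₁ m₂ n : Type*} [AddCommMonoid R]
    (A₁ C₁ : Matrix m₁ n R) (A₂ C₂ : Matrix m₂ n R) :
    fromRows A₁ A₂ + fromRows C₁ C₂ = fromRows (A₁ + C₁) (A₂ + C₂) := by
  ext (i | i) j <;> rfl

private lemma auxFromColumnsAdd {R m n₁ n₂ : Type*} [AddCommMonoid R]
    (A₁ C₁ : Matrix m n₁ R) (A₂ C₂ : Matrix m n₂ R) :
    fromCols A₁ A₂ + fromCols C₁ C₂ = fromCols (A₁ + C₁) (A₂ + C₂) := by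
  ext i (j | j) <;> rfl

private lemma auxEvalCharpoly {n R : Type*} [Fintype n] [DecidableEq n] [CommRing R]
    (M : Matrix n n R) (t : R) :
    M.charpoly.eval t = (Matrix.diagonal (fun _ => t) - M).det := by
  rw [Matrix.charpoly, ← coe_evalRingHom, RingHom.map_det]
  congr 1
  ext i j
  rcases eq_or_ne i j with rfl | h
  · simp
  · simp [Matrix.charmatrix_apply_ne _ _ _ h, Matrix.diagonal_apply_ne _ h]

private lemma auxSpecIff {n K : Type*} [Fintype n] [DecidableEq n] [Field K]
    (M : Matrix n n K) (μ : K) :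
    μ ∈ spectrum K M ↔ M.charpoly.eval μ = 0 := by
  have hA : (algebraMap K (Matrix n n K)) μ = Matrix.diagonal (fun _ => μ) := by
    ext i j
    rcases eq_or_ne i j with rfl | h
    · simp [Matrix.algebraMap_matrix_apply]
    · simp [Matrix.algebraMap_matrix_apply, h, Matrix.diagonal_apply_ne _ h]
  rw [spectrum.mem_iff, hA, Matrix.isUnit_iff_isUnit_det, isUnit_iff_ne_zero, not_ne_iff,
    auxEvalCharpoly]

private lemma auxCharpolyOne (k : ℕ) :
    (1 : Matrix (Fin k) (Fin k) ℝ).charpoly = ((X : ℝ[X]) - C 1) ^ k := by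
  rw [Matrix.charpoly]
  have h : charmatrix (1 : Matrix (Fin k) (Fin k) ℝ)
      = Matrix.diagonal (fun _ => (X : ℝ[X]) - C 1) := by
    ext i j
    rcases eq_or_ne i j with rfl | h
    · simp
    · simp [Matrix.charmatrix_apply_ne _ _ _ h, Matrix.one_apply_ne h,
        Matrix.diagonal_apply_ne _ h]
  rw [h, Matrix.det_diagonal]
  simp [Finset.prod_const]

private lemma auxPSDfactor {n 𝕜 : Type*} [Fintype n] [DecidableEq n] [RCLike 𝕜]
    {N : Matrix n n 𝕜} (hN : N.PosSemidef) : ∃ B : Matrix n n 𝕜, N = Bᴴ * B := by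
  open scoped MatrixOrder in
  exact CStarAlgebra.nonneg_iff_eq_star_mul_self.mp hN.nonneg

private lemma auxPSDmap {n : Type*} [Fintype n] [DecidableEq n] {N : Matrix n n ℝ}
    (hN : N.PosSemidef) : (N.map (Complex.ofReal : ℝ → ℂ)).PosSemidef := by
  obtain ⟨B, rfl⟩ := auxPSDfactor hN
  have h1 : ((Bᴴ * B).map (Complex.ofReal : ℝ → ℂ))
      = (B.map (Complex.ofReal : ℝ → ℂ))ᴴ * (B.map (Complex.ofReal : ℝ → ℂ)) := by
    ext i j
    simp [Matrix.mul_apply, Matrix.conjTranspose_apply, Complex.conj_ofReal]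
  rw [h1]
  exact Matrix.posSemidef_conjTranspose_mul_self _

private lemma auxFCFR {R m₁ m₂ n₁ n₂ : Type*} [Zero R]
    (B₁₁ : Matrix m₁ n₁ R) (B₁₂ : Matrix m₁ n₂ R) (B₂₁ : Matrix m₂ n₁ R) (B₂₂ : Matrix m₂ n₂ R) :
    fromCols (fromRows B₁₁ B₂₁) (fromRows B₁₂ B₂₂) = fromBlocks B₁₁ B₁₂ B₂₁ B₂₂ := by
  ext (i | i) (j | j) <;> rfl

private lemma auxFCFR₂ {R m₁ m₂ n₁ n₂ : Type*} [Zero R]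
    (B₁₁ : Matrix m₁ n₁ R) (B₂₁ : Matrix m₂ n₁ R) :
    fromCols (fromRows B₁₁ B₂₁) (0 : Matrix (m₁ ⊕ m₂) n₂ R) = fromBlocks B₁₁ 0 B₂₁ 0 := by
  ext (i | i) (j | j) <;> rfl

private lemma auxFCFR₃ {R m₁ m₂ n₁ n₂ : Type*} [Zero R]
    (B₁₂ : Matrix m₁ n₂ R) (B₂₂ : Matrix m₂ n₂ R) :
    fromCols (0 : Matrix (m₁ ⊕ m₂) n₁ R) (fromRows B₁₂ B₂₂) = fromBlocks 0 B₁₂ 0 B₂₂ := by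
  ext (i | i) (j | j) <;> rfl

private lemma auxNegFromRows {R m₁ m₂ n : Type*} [AddGroup R]
    (A₁ : Matrix m₁ n R) (A₂ : Matrix m₂ n R) :
    -(fromRows A₁ A₂) = fromRows (-A₁) (-A₂) := by
  ext (i | i) j <;> rfl

private lemma auxNegFromColumns {R m n₁ n₂ : Type*} [AddGroup R]
    (A₁ : Matrix m n₁ R) (A₂ : Matrix m n₂ R) :
    -(fromCols A₁ A₂) = fromCols (-A₁) (-A₂) := by
  ext i (j | j) <;> rfl

private lemma auxFromBlocksZero {R m₁ m₂ n₁ n₂ : Type*} [Zero R] :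
    fromBlocks (0 : Matrix m₁ n₁ R) (0 : Matrix m₁ n₂ R) (0 : Matrix m₂ n₁ R)
      (0 : Matrix m₂ n₂ R) = 0 := by
  ext (i | i) (j | j) <;> rfl

theorem stmt5 {nu nρ : ℕ}
    (H Ju : Matrix (Fin nu) (Fin nu) ℝ) (W : Matrix (Fin nρ) (Fin nρ) ℝ)
    (Jρ : Matrix (Fin nu) (Fin nρ) ℝ)
    (hH : H.PosSemidef) (hW : W.PosDef) (hJu : IsUnit Ju.det)
    (A At : Matrix ((Fin nu ⊕ Fin nρ) ⊕ Fin nu) ((Fin nu ⊕ Fin nρ) ⊕ Fin nu) ℝ)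
    (hA : A = fromBlocks (fromBlocks H 0 0 W) (fromRows Juᵀ Jρᵀ) (fromCols Ju Jρ) 0)
    (hAt : At = fromBlocks (fromBlocks H 0 0 W) (fromRows Juᵀ Jρᵀ) (fromCols Ju 0) 0) :
    (∀ μ ∈ spectrum ℂ ((At⁻¹ * A).map (Complex.ofReal : ℝ → ℂ)),
      μ.im = 0 ∧ 1 ≤ μ.re ∧
        (μ = 1 ∨ ∃ ν ∈ spectrum ℝ (W⁻¹ * ((Ju⁻¹ * Jρ)ᵀ * H * (Ju⁻¹ * Jρ))),
          μ = 1 + (ν : ℂ))) ∧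
    2 * nu ≤ (Matrix.charpoly (At⁻¹ * A)).rootMultiplicity 1 := by
  classical
  have hJut : IsUnit (Juᵀ).det := by rwa [Matrix.det_transpose]
  have hWdet : IsUnit W.det := isUnit_iff_ne_zero.mpr hW.det_pos.ne'
  have cJu : ∀ {m : Type} (X : Matrix (Fin nu) m ℝ), Ju * (Ju⁻¹ * X) = X :=
    fun X => Matrix.mul_nonsing_inv_cancel_left _ X hJu
  have cJut : ∀ {m : Type} (X : Matrix (Fin nu) m ℝ), Juᵀ * ((Juᵀ)⁻¹ * X) = X :=
    fun X => Matrix.mul_nonsing_inv_cancel_left _ X hJut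
  have cW : ∀ {m : Type} (X : Matrix (Fin nρ) m ℝ), W * (W⁻¹ * X) = X :=
    fun X => Matrix.mul_nonsing_inv_cancel_left _ X hWdet
  have hJuJu : Ju * Ju⁻¹ = 1 := Matrix.mul_nonsing_inv _ hJu
  have hJutJut : Juᵀ * (Juᵀ)⁻¹ = 1 := Matrix.mul_nonsing_inv _ hJut
  have hWW : W * W⁻¹ = 1 := Matrix.mul_nonsing_inv _ hWdet
  set G : Matrix (Fin nu) (Fin nρ) ℝ := Ju⁻¹ * Jρ with hG
  set Hd : Matrix (Fin nρ) (Fin nρ) ℝ := (Ju⁻¹ * Jρ)ᵀ * H * (Ju⁻¹ * Jρ) with hHd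
  set M0 : Matrix (Fin nρ) (Fin nρ) ℝ := W⁻¹ * Hd with hM0
  set R0 : Matrix (Fin nu) (Fin nρ) ℝ := -((Juᵀ)⁻¹ * (H * (Ju⁻¹ * Jρ))) with hR0
  set K : Matrix ((Fin nu ⊕ Fin nρ) ⊕ Fin nu) ((Fin nu ⊕ Fin nρ) ⊕ Fin nu) ℝ :=
    fromBlocks (fromBlocks 0 G 0 M0) 0 (fromCols 0 R0) 0 with hK
  -- At is invertible
  have hAtY : At * (fromBlocks
      (fromBlocks 0 0 (-(W⁻¹ * (Jρᵀ * (Juᵀ)⁻¹))) W⁻¹)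
      (fromRows Ju⁻¹ (W⁻¹ * (Jρᵀ * ((Juᵀ)⁻¹ * (H * Ju⁻¹)))))
      (fromCols (Juᵀ)⁻¹ 0)
      (-((Juᵀ)⁻¹ * (H * Ju⁻¹)))) = 1 := by
    rw [hAt]
    simp only [Matrix.fromBlocks_multiply, Matrix.fromRows_mul_fromCols,
      Matrix.fromCols_mul_fromRows, Matrix.fromCols_mul_fromBlocks,
      Matrix.fromBlocks_mul_fromRows, Matrix.fromRows_mul, Matrix.mul_fromCols,
      Matrix.mul_neg, Matrix.neg_mul, Matrix.mul_zero, Matrix.zero_mul, Matrix.mul_one,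
      add_zero, zero_add, Matrix.fromBlocks_add,
      auxFromRowsAdd, auxFromColumnsAdd, cJu, cJut, cW, hJuJu, hJutJut, hWW,
      Matrix.mul_assoc, neg_add_cancel, add_neg_cancel, Matrix.fromRows_zero,
      Matrix.fromCols_zero, Matrix.fromBlocks_one, auxFCFR, auxFCFR₂, auxFCFR₃,
      auxNegFromRows, auxNegFromColumns, auxFromBlocksZero, neg_zero]
  have hAtdet : IsUnit At.det := Matrix.isUnit_det_of_right_inverse hAtY
  -- A = At * (1 + K)
  have hAeq : A = At * (1 + K) := by
    rw [Matrix.mul_add, Matrix.mul_one, hAt, hA, hK]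
    simp only [Matrix.fromBlocks_multiply, Matrix.fromRows_mul_fromCols,
      Matrix.fromCols_mul_fromRows, Matrix.fromCols_mul_fromBlocks,
      Matrix.fromBlocks_mul_fromRows, Matrix.fromRows_mul, Matrix.mul_fromCols,
      hR0, hM0, hHd, hG, Matrix.mul_neg, Matrix.neg_mul, Matrix.mul_zero, Matrix.zero_mul,
      Matrix.mul_one, add_zero, zero_add,
      Matrix.fromBlocks_add, auxFromRowsAdd, auxFromColumnsAdd, cJu, cJut, cW,
      hJuJu, hJutJut, hWW, Matrix.mul_assoc, Matrix.transpose_mul,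
      Matrix.transpose_nonsing_inv, neg_add_cancel, add_neg_cancel, auxFCFR, auxFCFR₂,
      auxFCFR₃, auxNegFromRows, auxNegFromColumns, auxFromBlocksZero, neg_zero]
  have hGS : At⁻¹ * A = 1 + K := by
    rw [hAeq, ← Matrix.mul_assoc, Matrix.nonsing_inv_mul _ hAtdet, Matrix.one_mul]
  -- charpoly
  have hinner : (1 : Matrix (Fin nu ⊕ Fin nρ) (Fin nu ⊕ Fin nρ) ℝ) + fromBlocks 0 G 0 M0
      = fromBlocks 1 G 0 (1 + M0) := by
    rw [← Matrix.fromBlocks_one, Matrix.fromBlocks_add]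
    simp
  have h1K : 1 + K = fromBlocks (fromBlocks 1 G 0 (1 + M0)) 0 (fromCols 0 R0) 1 := by
    rw [hK, ← Matrix.fromBlocks_one (l := (Fin nu ⊕ Fin nρ)) (m := Fin nu),
      Matrix.fromBlocks_add, hinner]
    simp
  have hcharpoly : (At⁻¹ * A).charpoly
      = ((X : ℝ[X]) - C 1) ^ (2 * nu) * (1 + M0).charpoly := by
    rw [hGS, h1K, Matrix.charpoly_fromBlocks_zero₁₂, Matrix.charpoly_fromBlocks_zero₂₁,
      auxCharpolyOne]
    ring
  constructor
  · intro μ hμ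
    have hcoe : (Complex.ofReal : ℝ → ℂ) = ⇑(Complex.ofRealHom) := rfl
    have h0 : (((At⁻¹ * A).map (Complex.ofReal : ℝ → ℂ)).charpoly).eval μ = 0 :=
      (auxSpecIff _ μ).mp hμ
    rw [hcoe, Matrix.charpoly_map, hcharpoly, Polynomial.map_mul, Polynomial.map_pow,
      Polynomial.map_sub, Polynomial.map_X, Polynomial.map_C] at h0
    simp only [eval_mul, eval_pow, eval_sub, eval_X, eval_C, eval_one, _root_.map_one] at h0
    rcases mul_eq_zero.mp h0 with h1 | h2
    · have hμ1 : μ = 1 := by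
        have h1' := (pow_eq_zero_iff'.mp h1).1
        have : μ - 1 = 0 := h1'
        linear_combination this
      subst hμ1
      exact ⟨by simp, by simp, Or.inl rfl⟩
    · have h2' : (Matrix.diagonal (fun _ : Fin nρ => μ)
          - ((1 + M0).map (Complex.ofReal : ℝ → ℂ))).det = 0 := by
        rw [← auxEvalCharpoly, hcoe, Matrix.charpoly_map]
        exact h2
      obtain ⟨v, hv0, hveq⟩ := Matrix.exists_mulVec_eq_zero_iff.mpr h2'
      have h7 : ((1 + M0).map (Complex.ofReal : ℝ → ℂ))
          = 1 + M0.map (Complex.ofReal : ℝ → ℂ) := by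
        ext i j
        rcases eq_or_ne i j with rfl | h
        · simp [Matrix.one_apply]
        · simp [Matrix.one_apply_ne h, Matrix.add_apply, h]
      have hev : (M0.map (Complex.ofReal : ℝ → ℂ)) *ᵥ v = (μ - 1) • v := by
        funext i
        have h8 := congrFun hveq i
        simp only [h7, Matrix.sub_mulVec, Matrix.add_mulVec, Matrix.one_mulVec, Pi.sub_apply,
          Pi.add_apply, Pi.smul_apply, Pi.zero_apply, smul_eq_mul,
          Matrix.mulVec_diagonal] at h8 ⊢
        linear_combination -h8
      have hWcPSD : (W.map (Complex.ofReal : ℝ → ℂ)).PosSemidef := auxPSDmap hW.posSemidef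
      have hHdPSD : Hd.PosSemidef := by
        rw [hHd, ← Matrix.conjTranspose_eq_transpose_of_trivial]
        exact hH.conjTranspose_mul_mul_same _
      have hHdcPSD : (Hd.map (Complex.ofReal : ℝ → ℂ)).PosSemidef := auxPSDmap hHdPSD
      have hWM0 : W * M0 = Hd := by rw [hM0]; exact cW _
      have hmapmul : (W * M0).map (Complex.ofReal : ℝ → ℂ)
          = (W.map (Complex.ofReal : ℝ → ℂ)) * (M0.map (Complex.ofReal : ℝ → ℂ)) := by
        rw [hcoe]
        exact Matrix.map_mul
      have h5 : (Hd.map (Complex.ofReal : ℝ → ℂ)) *ᵥ v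
          = (μ - 1) • ((W.map (Complex.ofReal : ℝ → ℂ)) *ᵥ v) := by
        rw [← hWM0, hmapmul, ← Matrix.mulVec_mulVec, hev, Matrix.mulVec_smul]
      set a := star v ⬝ᵥ ((Hd.map (Complex.ofReal : ℝ → ℂ)) *ᵥ v) with ha
      set b := star v ⬝ᵥ ((W.map (Complex.ofReal : ℝ → ℂ)) *ᵥ v) with hb
      have hab : a = (μ - 1) * b := by
        rw [ha, hb, h5, dotProduct_smul, smul_eq_mul]
      have ha0 : 0 ≤ a := hHdcPSD.dotProduct_mulVec_nonneg v
      have hb0 : 0 ≤ b := hWcPSD.dotProduct_mulVec_nonneg v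
      have hbne : b ≠ 0 := by
        obtain ⟨Cc, hCc⟩ := auxPSDfactor hWcPSD
        intro h9
        have h10 : star (Cc *ᵥ v) ⬝ᵥ (Cc *ᵥ v) = 0 := by
          rw [Matrix.star_mulVec, ← Matrix.dotProduct_mulVec, Matrix.mulVec_mulVec, ← hCc,
            ← hb, h9]
        have h11 : Cc *ᵥ v = 0 := dotProduct_star_self_eq_zero.mp h10
        have h12 : (W.map (Complex.ofReal : ℝ → ℂ)) *ᵥ v = 0 := by
          rw [hCc, ← Matrix.mulVec_mulVec, h11, Matrix.mulVec_zero]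
        have h13 : (W.map (Complex.ofReal : ℝ → ℂ)).det = 0 :=
          Matrix.exists_mulVec_eq_zero_iff.mp ⟨v, hv0, h12⟩
        have h14 : ((W.det : ℝ) : ℂ) = (W.map (Complex.ofReal : ℝ → ℂ)).det := by
          rw [hcoe]
          exact RingHom.map_det Complex.ofRealHom W
        rw [h13, Complex.ofReal_eq_zero] at h14
        exact hW.det_pos.ne' h14
      have haim : a.im = 0 := ((Complex.le_def.mp ha0).2).symm
      have hare : 0 ≤ a.re := by
        have := (Complex.le_def.mp ha0).1
        simpa using this
      have hbim : b.im = 0 := ((Complex.le_def.mp hb0).2).symm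
      have hbre : 0 ≤ b.re := by
        have := (Complex.le_def.mp hb0).1
        simpa using this
      have hbrepos : 0 < b.re := by
        rcases hbre.lt_or_eq with h | h
        · exact h
        · refine absurd (Complex.ext ?_ ?_) hbne
          · simpa using h.symm
          · simpa using hbim
      have h15 := congrArg Complex.im hab
      have h16 := congrArg Complex.re hab
      simp only [Complex.mul_im, Complex.mul_re, Complex.sub_im, Complex.sub_re,
        Complex.one_im, Complex.one_re, haim, hbim, mul_zero, zero_mul, sub_zero,
        add_zero, zero_add] at h15 h16
      have him : μ.im = 0 := by
        rcases mul_eq_zero.mp h15.symm with h | h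
        · simpa using h
        · exact absurd h hbrepos.ne'
      have hre : 1 ≤ μ.re := by nlinarith [hare, hbrepos, h16]
      refine ⟨him, hre, Or.inr ⟨μ.re - 1, ?_, ?_⟩⟩
      · rw [auxSpecIff]
        have hμr : ((μ.re : ℝ) : ℂ) = μ := Complex.ext rfl (by simp [him])
        have h17 : (((1 + M0).charpoly.eval μ.re : ℝ) : ℂ) = 0 := by
          calc (((1 + M0).charpoly.eval μ.re : ℝ) : ℂ)
              = ((1 + M0).charpoly.map (Complex.ofRealHom : ℝ →+* ℂ)).eval ((μ.re : ℝ) : ℂ) := by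
                rw [Polynomial.eval_map, hcoe, Polynomial.eval₂_at_apply]
            _ = 0 := by rw [hμr]; exact h2
        have h18 : (1 + M0).charpoly.eval μ.re = 0 := by exact_mod_cast h17
        rw [auxEvalCharpoly] at h18 ⊢
        have h19 : Matrix.diagonal (fun _ : Fin nρ => μ.re - 1) - M0
            = Matrix.diagonal (fun _ : Fin nρ => μ.re) - (1 + M0) := by
          ext i j
          rcases eq_or_ne i j with rfl | h
          · simp [Matrix.one_apply]
            ring
          · simp [Matrix.diagonal_apply_ne _ h, Matrix.one_apply_ne h, Matrix.add_apply]
        rw [h19]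
        exact h18
      · refine Complex.ext ?_ ?_
        · simp
        · simp [him]
  · refine (Polynomial.le_rootMultiplicity_iff ((At⁻¹ * A).charpoly_monic.ne_zero)).mpr
      ⟨(1 + M0).charpoly, by rw [hcharpoly]⟩
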